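/- arXiv:0902.4619 — 2 statements merged into one kernel-verified Lean document; each statement's English description precedes it below -/
import Mathlib

section
/- Let n ≥ 1 and let β be a real symmetric n×n matrix. Let F be a ℂ-valued function on the complex vector space of symmetric n×n complex matrices which is holomorphic (complex differentiable) on the Siegel upper half space 𝓗_n, and suppose that F(τ + u) = exp(2πi·tr(βu))·F(τ) for every τ ∈ 𝓗_n and every real symmetric n×n matrix u. Then there exists a constant c ∈ ℂ such that F(τ) = c·exp(2πi·tr(βτ)) for all τ ∈ 𝓗_n. -/
open Complex MeasureTheory

attribute [local instance] Matrix.normedAddCommGroup Matrix.normedSpace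

open Matrix
open scoped Matrix

section aux
variable {n : ℕ}

private def mcoe (u : Matrix (Fin n) (Fin n) ℝ) : Matrix (Fin n) (Fin n) ℂ :=
  u.map (fun x => (x : ℂ))

private lemma mcoe_smul (s : ℝ) (u : Matrix (Fin n) (Fin n) ℝ) :
    s • mcoe u = mcoe (s • u) := by
  ext i j; simp [mcoe]

private lemma mcoe_trace (u : Matrix (Fin n) (Fin n) ℝ) :
    (mcoe u).trace = ((u.trace : ℝ) : ℂ) := by
  simp [mcoe, Matrix.trace, Matrix.diag]

private lemma mcoe_mul (u v : Matrix (Fin n) (Fin n) ℝ) :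
    mcoe (u * v) = mcoe u * mcoe v := by
  ext i j; simp [mcoe, Matrix.mul_apply]

private lemma posDef_smul {P : Matrix (Fin n) (Fin n) ℝ} (hP : P.PosDef) {c : ℝ} (hc : 0 < c) :
    (c • P).PosDef := by
  refine ⟨?_, fun x hx => ?_⟩
  · show (c • P)ᴴ = c • P
    rw [Matrix.conjTranspose_smul, star_trivial, hP.1]
  · exact (hP.smul hc).2 hx

private lemma mcoe_isSymm {u : Matrix (Fin n) (Fin n) ℝ} (hu : u.IsSymm) :
    (mcoe u).IsSymm := hu.map _

end aux

/-- A function holomorphic on the Siegel upper half space `𝓗_n`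
(inside the space of symmetric complex `n × n` matrices) which transforms under
translation by real symmetric matrices `u` by the character
`u ↦ exp(2πi·tr(βu))` is a constant multiple of `exp(2πi·tr(βτ))`. -/
theorem holomorphic_translation_character_eq_const_mul_exp
    (n : ℕ) (hn : 1 ≤ n) (β : Matrix (Fin n) (Fin n) ℝ) (hβ : β.IsSymm)
    (F : Matrix (Fin n) (Fin n) ℂ → ℂ)
    (H : Set (Matrix (Fin n) (Fin n) ℂ))
    (hH : H = {τ | τ.IsSymm ∧
      (Matrix.of fun i j => (τ i j).im : Matrix (Fin n) (Fin n) ℝ).PosDef})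
    (hol : DifferentiableOn ℂ F H)
    (per : ∀ τ ∈ H, ∀ u : Matrix (Fin n) (Fin n) ℝ, u.IsSymm →
      F (τ + u.map (fun x => (x : ℂ))) =
        Complex.exp (2 * Real.pi * Complex.I * ((β * u).trace : ℝ)) * F τ) :
    ∃ c : ℂ, ∀ τ ∈ H,
      F τ = c * Complex.exp (2 * Real.pi * Complex.I *
        ((β.map (fun x => (x : ℂ))) * τ).trace) := by
  classical
  have hmem : ∀ τ : Matrix (Fin n) (Fin n) ℂ, τ ∈ H ↔ τ.IsSymm ∧
      (Matrix.of fun i j => (τ i j).im : Matrix (Fin n) (Fin n) ℝ).PosDef := by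
    intro τ; rw [hH]; exact Iff.rfl
  -- real translations stay in H
  have htrans : ∀ τ ∈ H, ∀ u : Matrix (Fin n) (Fin n) ℝ, u.IsSymm → τ + mcoe u ∈ H := by
    intro τ hτ u hu
    obtain ⟨h1, h2⟩ := (hmem τ).mp hτ
    refine (hmem _).mpr ⟨h1.add (mcoe_isSymm hu), ?_⟩
    convert h2 using 2
    ext i j
    simp [mcoe]
  -- purely imaginary points of H
  have hI : ∀ y : Matrix (Fin n) (Fin n) ℝ, y.IsSymm → y.PosDef →
      Complex.I • mcoe y ∈ H := by
    intro y hy hypos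
    refine (hmem _).mpr ⟨(mcoe_isSymm hy).smul _, ?_⟩
    have : (Matrix.of fun i j => ((Complex.I • mcoe y) i j).im
        : Matrix (Fin n) (Fin n) ℝ) = y := by
      ext i j; simp [mcoe]
    rw [this]; exact hypos
  -- the directional derivative of F along real symmetric directions
  have key : ∀ τ ∈ H, ∀ L : Matrix (Fin n) (Fin n) ℂ →L[ℂ] ℂ, HasFDerivWithinAt F L H τ →
      ∀ u : Matrix (Fin n) (Fin n) ℝ, u.IsSymm →
      L (mcoe u) = 2 * Real.pi * Complex.I * (((β * u).trace : ℝ) : ℂ) * F τ := by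
    intro τ hτ L hL u hu
    set a : ℂ := 2 * Real.pi * Complex.I * (((β * u).trace : ℝ) : ℂ) with ha
    have hp : HasDerivAt (fun s : ℝ => τ + s • mcoe u) (mcoe u) 0 := by
      have h := ((hasDerivAt_id (0:ℝ)).smul_const (mcoe u)).const_add τ; simp only [id_eq, one_smul] at h; exact h
    have hmaps : ∀ s : ℝ, τ + s • mcoe u ∈ H := by
      intro s
      rw [mcoe_smul]
      exact htrans τ hτ _ (hu.smul s)
    have h1 : HasDerivWithinAt (F ∘ fun s : ℝ => τ + s • mcoe u)
        ((L.restrictScalars ℝ) (mcoe u)) Set.univ 0 :=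
      (hL.restrictScalars ℝ).comp_hasDerivWithinAt_of_eq 0 hp.hasDerivWithinAt
        (fun s _ => hmaps s) (by simp)
    rw [hasDerivWithinAt_univ] at h1
    have heq : (F ∘ fun s : ℝ => τ + s • mcoe u)
        = fun s : ℝ => Complex.exp (a * s) * F τ := by
      funext s
      have h2 := per τ hτ (s • u) (hu.smul s)
      simp only [Function.comp]
      rw [mcoe_smul]
      rw [show ((s • u).map (fun x : ℝ => (x:ℂ))) = mcoe (s • u) from rfl] at h2
      rw [h2]
      congr 1
      rw [Matrix.mul_smul, Matrix.trace_smul, smul_eq_mul, ha]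
      push_cast
      ring
    have h3 : HasDerivAt (fun s : ℝ => Complex.exp (a * s) * F τ) (a * F τ) 0 := by
      have hc : HasDerivAt (fun w : ℂ => Complex.exp (a * w))
          (Complex.exp (a * (0:ℂ)) * (a * 1)) 0 :=
        ((hasDerivAt_id (0:ℂ)).const_mul a).cexp
      have hc2 := (hc.comp_ofReal).mul_const (F τ)
      simpa using hc2
    rw [heq] at h1
    simpa using h1.unique h3
  -- constancy along segments on the imaginary axis
  have seg : ∀ y : Matrix (Fin n) (Fin n) ℝ, y.IsSymm → y.PosDef →
      F (Complex.I • mcoe y) * Complex.exp (((2 * Real.pi * (β * y).trace : ℝ)) : ℂ)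
        = F (Complex.I • mcoe 1)
          * Complex.exp (((2 * Real.pi * (β * (1 : Matrix (Fin n) (Fin n) ℝ)).trace : ℝ)) : ℂ) := by
    intro y hy hypos
    set A : Matrix (Fin n) (Fin n) ℂ := Complex.I • mcoe 1 with hA
    set V : Matrix (Fin n) (Fin n) ℂ := Complex.I • mcoe (y - 1) with hV
    set c₁ : ℂ := ((2 * Real.pi * (β * (1 : Matrix (Fin n) (Fin n) ℝ)).trace : ℝ) : ℂ) with hc₁
    set c₂ : ℂ := ((2 * Real.pi * (β * (y - 1)).trace : ℝ) : ℂ) with hc₂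
    set g : ℝ → ℂ := fun t => F (A + t • V) * Complex.exp (c₁ + c₂ * t) with hg
    have hAV : ∀ t : ℝ, A + t • V
        = Complex.I • mcoe ((1 - t) • (1 : Matrix (Fin n) (Fin n) ℝ) + t • y) := by
      intro t; ext i j
      simp only [hA, hV, mcoe, Matrix.add_apply, Matrix.smul_apply, Matrix.sub_apply,
        Matrix.map_apply, smul_eq_mul, Complex.real_smul]
      push_cast
      ring
    have hYsymm : ∀ t : ℝ, ((1 - t) • (1 : Matrix (Fin n) (Fin n) ℝ) + t • y).IsSymm :=
      fun t => (Matrix.isSymm_one.smul _).add (hy.smul _)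
    have hYpos : ∀ t ∈ Set.Icc (0:ℝ) 1,
        ((1 - t) • (1 : Matrix (Fin n) (Fin n) ℝ) + t • y).PosDef := by
      intro t ht
      rcases eq_or_lt_of_le ht.1 with h0 | h0
      · rw [← h0]; simpa using Matrix.PosDef.one
      rcases eq_or_lt_of_le ht.2 with h1 | h1
      · rw [h1]; simpa using hypos
      exact (posDef_smul Matrix.PosDef.one (by linarith)).add (posDef_smul hypos h0)
    have hmemt : ∀ t ∈ Set.Icc (0:ℝ) 1, A + t • V ∈ H := by
      intro t ht; rw [hAV t]; exact hI _ (hYsymm t) (hYpos t ht)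
    have hderiv : ∀ t ∈ Set.Icc (0:ℝ) 1, HasDerivWithinAt g 0 (Set.Icc 0 1) t := by
      intro t ht
      have hmem' := hmemt t ht
      have hL := (hol _ hmem').hasFDerivWithinAt
      have hp : HasDerivAt (fun s : ℝ => A + s • V) V t := by
        have h := ((hasDerivAt_id t).smul_const V).const_add A; simp only [id_eq, one_smul] at h; exact h
      have h1 : HasDerivWithinAt (F ∘ fun s : ℝ => A + s • V)
          (((fderivWithin ℂ F H (A + t • V)).restrictScalars ℝ) V) (Set.Icc 0 1) t :=
        (hL.restrictScalars ℝ).comp_hasDerivWithinAt t hp.hasDerivWithinAt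
          (fun s hs => hmemt s hs)
      have hval : ((fderivWithin ℂ F H (A + t • V)).restrictScalars ℝ) V
          = -(c₂ * F (A + t • V)) := by
        have hk := key _ hmem' _ hL (y - 1) (hy.sub Matrix.isSymm_one)
        show (fderivWithin ℂ F H (A + t • V)) V = -(c₂ * F (A + t • V))
        rw [hV, (fderivWithin ℂ F H (A + t • V)).map_smul, hk, smul_eq_mul, hc₂]
        push_cast
        linear_combination (2 * (Real.pi:ℂ) * (((β * (y-1)).trace : ℝ):ℂ)
          * F (A + t • V)) * Complex.I_sq
      rw [hval] at h1
      have hE : HasDerivAt (fun s : ℝ => Complex.exp (c₁ + c₂ * s))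
          (c₂ * Complex.exp (c₁ + c₂ * t)) t := by
        have hc : HasDerivAt (fun w : ℂ => Complex.exp (c₁ + c₂ * w))
            (Complex.exp (c₁ + c₂ * (t:ℂ)) * (c₂ * 1)) (t:ℂ) :=
          (((hasDerivAt_id ((t:ℝ):ℂ)).const_mul c₂).const_add c₁).cexp
        simpa [mul_comm] using hc.comp_ofReal
      have h2 := h1.mul hE.hasDerivWithinAt
      have h3 : HasDerivWithinAt g
          (-(c₂ * F (A + t • V)) * Complex.exp (c₁ + c₂ * t)
            + F (A + t • V) * (c₂ * Complex.exp (c₁ + c₂ * t))) (Set.Icc 0 1) t := h2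
      convert h3 using 1
      ring
    have hcont : ContinuousOn g (Set.Icc (0:ℝ) 1) := by
      apply ContinuousOn.mul
      · exact hol.continuousOn.comp
          (Continuous.continuousOn
            (continuous_const.add (continuous_id.smul continuous_const)))
          (fun s hs => hmemt s hs)
      · exact Continuous.continuousOn
          (Complex.continuous_exp.comp
            (continuous_const.add (continuous_const.mul Complex.continuous_ofReal)))
    have hconst := constant_of_has_deriv_right_zero hcont (fun x hx =>
      (hderiv x (Set.Ico_subset_Icc_self hx)).mono_of_mem_nhdsWithin
        (Icc_mem_nhdsGE_of_mem hx))
    have h01 := hconst 1 (Set.right_mem_Icc.mpr zero_le_one)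
    simp only [hg, one_smul, zero_smul, add_zero, Complex.ofReal_one, mul_one,
      Complex.ofReal_zero, mul_zero] at h01
    have hAV1 : A + V = Complex.I • mcoe y := by
      have := hAV 1
      rw [one_smul] at this
      rw [this]
      norm_num
    rw [hAV1] at h01
    have hsum : c₁ + c₂ = ((2 * Real.pi * (β * y).trace : ℝ) : ℂ) := by
      rw [hc₁, hc₂, Matrix.mul_sub, Matrix.trace_sub]
      push_cast
      ring
    rw [← hsum, h01, hc₁]
  -- conclusion
  refine ⟨F (Complex.I • mcoe 1)
    * Complex.exp (((2 * Real.pi * (β * (1 : Matrix (Fin n) (Fin n) ℝ)).trace : ℝ)) : ℂ), ?_⟩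
  intro τ hτ
  obtain ⟨hsym, hpos⟩ := (hmem τ).mp hτ
  set x : Matrix (Fin n) (Fin n) ℝ := Matrix.of fun i j => (τ i j).re with hxdef
  set y : Matrix (Fin n) (Fin n) ℝ := Matrix.of fun i j => (τ i j).im with hydef
  have hxs : x.IsSymm := Matrix.IsSymm.ext fun i j => by
    simp only [hxdef, Matrix.of_apply]
    exact congrArg Complex.re (hsym.apply i j)
  have hys : y.IsSymm := Matrix.IsSymm.ext fun i j => by
    simp only [hydef, Matrix.of_apply]
    exact congrArg Complex.im (hsym.apply i j)
  have hypos : y.PosDef := hpos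
  have hdecomp : τ = Complex.I • mcoe y + mcoe x := by
    ext i j
    rw [Matrix.add_apply, Matrix.smul_apply]
    apply Complex.ext <;> simp [mcoe, hxdef, hydef]
  have hFτ : F τ = Complex.exp (2 * Real.pi * Complex.I * (((β * x).trace : ℝ) : ℂ))
      * F (Complex.I • mcoe y) := by
    have h := per _ (hI y hys hypos) x hxs
    rw [show (x.map (fun r : ℝ => (r:ℂ))) = mcoe x from rfl] at h
    rw [hdecomp]
    exact h
  have hseg := seg y hys hypos
  have hFy : F (Complex.I • mcoe y)
      = (F (Complex.I • mcoe 1)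
          * Complex.exp (((2 * Real.pi * (β * (1 : Matrix (Fin n) (Fin n) ℝ)).trace : ℝ)) : ℂ))
        * Complex.exp (-(((2 * Real.pi * (β * y).trace : ℝ)) : ℂ)) := by
    rw [← hseg, mul_assoc, ← Complex.exp_add]
    simp
  have htr : ((β.map (fun r : ℝ => (r:ℂ))) * τ).trace
      = (((β * x).trace : ℝ) : ℂ) + Complex.I * (((β * y).trace : ℝ) : ℂ) := by
    rw [hdecomp, show (β.map (fun r : ℝ => (r:ℂ))) = mcoe β from rfl]
    rw [Matrix.mul_add, Matrix.trace_add, Matrix.mul_smul, Matrix.trace_smul,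
      ← mcoe_mul, ← mcoe_mul, mcoe_trace, mcoe_trace, smul_eq_mul]
    ring
  rw [hFτ, hFy, htr]
  have hexp : 2 * (Real.pi:ℂ) * Complex.I
        * ((((β * x).trace : ℝ) : ℂ) + Complex.I * (((β * y).trace : ℝ) : ℂ))
      = 2 * Real.pi * Complex.I * (((β * x).trace : ℝ) : ℂ)
        + -(((2 * Real.pi * (β * y).trace : ℝ)) : ℂ) := by
    push_cast
    linear_combination (2 * (Real.pi:ℂ) * (((β * y).trace : ℝ):ℂ)) * Complex.I_sq
  rw [hexp, Complex.exp_add]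
  ring
end

section
/- Let p be a prime and n ≥ 1. Let J be the 2n×2n matrix with block form (0, 1_n; -1_n, 0) and let K be the set of 2n×2n matrices g with entries in ℤ_p such that gᵀJg = λ·J for some unit λ ∈ ℤ_p^×, and such that the lower-left n×n block of g has all entries divisible by p. Let M = diag(p, ..., p, 1, ..., 1) (n entries p followed by n entries 1). Then the double coset K·M·K (the set of all products k₁Mk₂ with k₁, k₂ ∈ K) is equal to the union over all symmetric n×n integer matrices B with entries in {0, 1, ..., p-1} of the left cosets (block matrix (p·1_n, B; 0, 1_n))·K, and these cosets are pairwise disjoint; in particular K·M·K is the disjoint union of exactly p^{n(n+1)/2} left cosets of K. -/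
open Matrix


namespace HeckeAux

variable {p : ℕ} [Fact p.Prime] {n : ℕ}

noncomputable abbrev Jmat (p n : ℕ) [Fact p.Prime] :
    Matrix (Fin n ⊕ Fin n) (Fin n ⊕ Fin n) ℚ_[p] := Matrix.fromBlocks 0 1 (-1) 0

def KK (p n : ℕ) [Fact p.Prime] : Set (Matrix (Fin n ⊕ Fin n) (Fin n ⊕ Fin n) ℚ_[p]) :=
  {g | (∀ i j, ‖g i j‖ ≤ 1) ∧
    (∃ lam : ℚ_[p], ‖lam‖ = 1 ∧ gᵀ * Jmat p n * g = lam • Jmat p n) ∧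
    (∀ i j : Fin n, ‖g (Sum.inr i) (Sum.inl j)‖ ≤ ((p : ℝ))⁻¹)}

lemma pinv_nonneg : (0:ℝ) ≤ (p:ℝ)⁻¹ := by positivity

lemma pinv_le_one : ((p:ℝ))⁻¹ ≤ 1 := by
  have h : (1:ℝ) ≤ (p:ℝ) := by exact_mod_cast (Fact.out : p.Prime).one_lt.le
  exact inv_le_one_of_one_le₀ h

lemma mul_entry_le {m : Type*} [Fintype m] (g h : Matrix m m ℚ_[p]) (a b : m) {c : ℝ}
    (hc : 0 ≤ c) (hb : ∀ k, ‖g a k‖ * ‖h k b‖ ≤ c) : ‖(g * h) a b‖ ≤ c := by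
  rw [Matrix.mul_apply]
  refine IsUltrametricDist.norm_sum_le_of_forall_le_of_nonneg hc fun k _ => ?_
  rw [norm_mul]
  exact hb k

lemma JJ : Jmat p n * Jmat p n = -1 := by
  simp [Jmat, Matrix.fromBlocks_multiply, ← Matrix.fromBlocks_one, Matrix.fromBlocks_neg]

lemma one_mem_KK : (1 : Matrix (Fin n ⊕ Fin n) (Fin n ⊕ Fin n) ℚ_[p]) ∈ KK p n := by
  refine ⟨fun i j => ?_, ⟨1, by simp, by simp⟩, fun i j => ?_⟩
  · rcases eq_or_ne i j with rfl | hij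
    · simp [Matrix.one_apply_eq]
    · simp [Matrix.one_apply_ne hij]
  · rw [Matrix.one_apply_ne (by simp)]
    simpa using pinv_nonneg

lemma mul_mem_KK {g h : Matrix (Fin n ⊕ Fin n) (Fin n ⊕ Fin n) ℚ_[p]}
    (hg : g ∈ KK p n) (hh : h ∈ KK p n) : g * h ∈ KK p n := by
  obtain ⟨hg1, ⟨lam, hlam, hgl⟩, hg2⟩ := hg
  obtain ⟨hh1, ⟨mu, hmu, hhl⟩, hh2⟩ := hh
  refine ⟨fun i j => ?_, ⟨lam * mu, ?_, ?_⟩, fun i j => ?_⟩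
  · refine mul_entry_le g h i j zero_le_one fun k => ?_
    calc ‖g i k‖ * ‖h k j‖ ≤ 1 * 1 := by
          exact mul_le_mul (hg1 i k) (hh1 k j) (norm_nonneg _) zero_le_one
      _ = 1 := by ring
  · rw [norm_mul, hlam, hmu]; ring
  · calc (g * h)ᵀ * Jmat p n * (g * h) = hᵀ * (gᵀ * Jmat p n * g) * h := by
          rw [Matrix.transpose_mul]; noncomm_ring
      _ = lam • (hᵀ * Jmat p n * h) := by rw [hgl]; simp [Matrix.mul_smul, Matrix.smul_mul]
      _ = (lam * mu) • Jmat p n := by rw [hhl, smul_smul]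
  · refine mul_entry_le g h _ _ pinv_nonneg fun k => ?_
    rcases k with a | a
    · calc ‖g (Sum.inr i) (Sum.inl a)‖ * ‖h (Sum.inl a) (Sum.inl j)‖ ≤ (p:ℝ)⁻¹ * 1 :=
            mul_le_mul (hg2 i a) (hh1 _ _) (norm_nonneg _) pinv_nonneg
        _ = (p:ℝ)⁻¹ := by ring
    · calc ‖g (Sum.inr i) (Sum.inr a)‖ * ‖h (Sum.inr a) (Sum.inl j)‖ ≤ 1 * (p:ℝ)⁻¹ :=
            mul_le_mul (hg1 _ _) (hh2 a j) (norm_nonneg _) zero_le_one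
        _ = (p:ℝ)⁻¹ := by ring

end HeckeAux
namespace HeckeAux
variable {p : ℕ} [Fact p.Prime] {n : ℕ}


lemma Jmul_inl (X : Matrix (Fin n ⊕ Fin n) (Fin n ⊕ Fin n) ℚ_[p]) (i : Fin n) (b) :
    (Jmat p n * X) (Sum.inl i) b = X (Sum.inr i) b := by
  simp [Matrix.mul_apply, Fintype.sum_sum_type, Matrix.one_apply, ite_mul,
    Finset.sum_ite_eq, Finset.mem_univ]

lemma Jmul_inr (X : Matrix (Fin n ⊕ Fin n) (Fin n ⊕ Fin n) ℚ_[p]) (i : Fin n) (b) :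
    (Jmat p n * X) (Sum.inr i) b = -X (Sum.inl i) b := by
  simp [Matrix.mul_apply, Fintype.sum_sum_type, Matrix.one_apply, ite_mul,
    Finset.sum_ite_eq, Finset.mem_univ]

lemma mulJ_inl (X : Matrix (Fin n ⊕ Fin n) (Fin n ⊕ Fin n) ℚ_[p]) (a) (j : Fin n) :
    (X * Jmat p n) a (Sum.inl j) = -X a (Sum.inr j) := by
  simp [Matrix.mul_apply, Fintype.sum_sum_type, Matrix.one_apply, mul_ite,
    Finset.sum_ite_eq', Finset.mem_univ]

lemma mulJ_inr (X : Matrix (Fin n ⊕ Fin n) (Fin n ⊕ Fin n) ℚ_[p]) (a) (j : Fin n) :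
    (X * Jmat p n) a (Sum.inr j) = X a (Sum.inl j) := by
  simp [Matrix.mul_apply, Fintype.sum_sum_type, Matrix.one_apply, mul_ite,
    Finset.sum_ite_eq', Finset.mem_univ]

end HeckeAux
namespace HeckeAux2
open HeckeAux HeckeAux
variable {p : ℕ} [Fact p.Prime] {n : ℕ}


lemma inv_similitude {g h : Matrix (Fin n ⊕ Fin n) (Fin n ⊕ Fin n) ℚ_[p]} {lam : ℚ_[p]}
    (hlne : lam ≠ 0) (hgl : gᵀ * Jmat p n * g = lam • Jmat p n) (hmul : g * h = 1) :
    hᵀ * Jmat p n * h = lam⁻¹ • Jmat p n := by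
  have h2 : hᵀ * (gᵀ * Jmat p n * g) * h = Jmat p n := by
    have h3 : hᵀ * (gᵀ * Jmat p n * g) * h = (g * h)ᵀ * Jmat p n * (g * h) := by
      rw [Matrix.transpose_mul]; noncomm_ring
    rw [h3, hmul]; simp
  have h4 : lam • (hᵀ * Jmat p n * h) = Jmat p n := by
    calc lam • (hᵀ * Jmat p n * h) = hᵀ * (lam • Jmat p n) * h := by
          rw [Matrix.mul_smul, Matrix.smul_mul]
      _ = Jmat p n := by rw [← hgl, h2]
  have h5 := congrArg (fun X => lam⁻¹ • X) h4
  simpa [smul_smul, inv_mul_cancel₀ hlne] using h5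

lemma exists_inv {g : Matrix (Fin n ⊕ Fin n) (Fin n ⊕ Fin n) ℚ_[p]} (hg : g ∈ KK p n) :
    ∃ h ∈ KK p n, g * h = 1 ∧ h * g = 1 := by
  obtain ⟨hg1, ⟨lam, hlam, hgl⟩, hg2⟩ := hg
  have hlne : lam ≠ 0 := by intro h; rw [h] at hlam; simp at hlam
  set ginv : Matrix (Fin n ⊕ Fin n) (Fin n ⊕ Fin n) ℚ_[p] :=
    (-lam⁻¹) • (Jmat p n * gᵀ * Jmat p n) with hginv
  have hnorminv : ‖lam⁻¹‖ = 1 := by rw [norm_inv, hlam]; norm_num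
  have hentry : ∀ a b, ‖ginv a b‖ = ‖(Jmat p n * gᵀ * Jmat p n) a b‖ := by
    intro a b
    rw [hginv, Matrix.smul_apply, smul_eq_mul, norm_mul, norm_neg, hnorminv, one_mul]
  have hmulginv : ginv * g = 1 := by
    have h1 : (Jmat p n * gᵀ * Jmat p n) * g = Jmat p n * (gᵀ * Jmat p n * g) := by
      noncomm_ring
    rw [hginv, Matrix.smul_mul, h1, hgl, Matrix.mul_smul, JJ, smul_smul]
    rw [show (-lam⁻¹ * lam : ℚ_[p]) = -1 by rw [neg_mul, inv_mul_cancel₀ hlne]]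
    simp
  have hmul : g * ginv = 1 := mul_eq_one_comm.mpr hmulginv
  refine ⟨ginv, ⟨fun a b => ?_, ⟨lam⁻¹, hnorminv, ?_⟩, fun i j => ?_⟩, hmul, hmulginv⟩
  · rw [hentry]
    rcases a with i | i <;> rcases b with j | j
    · rw [mulJ_inl, Jmul_inl, norm_neg, Matrix.transpose_apply]; exact hg1 _ _
    · rw [mulJ_inr, Jmul_inl, Matrix.transpose_apply]; exact hg1 _ _
    · rw [mulJ_inl, Jmul_inr, neg_neg, Matrix.transpose_apply]; exact hg1 _ _
    · rw [mulJ_inr, Jmul_inr, norm_neg, Matrix.transpose_apply]; exact hg1 _ _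
  · exact inv_similitude hlne hgl hmul
  · rw [hentry, mulJ_inl, Jmul_inr, neg_neg, Matrix.transpose_apply]
    exact hg2 _ _

end HeckeAux2
namespace HeckeAux3
open HeckeAux HeckeAux2
variable {p : ℕ} [Fact p.Prime] {n : ℕ}

lemma field_symm_solution {F : Type*} [Field F] {A Bm D : Matrix (Fin n) (Fin n) F}
    {lam : F} (hlne : lam ≠ 0) (h1 : Aᵀ * D = lam • 1) (h3 : Dᵀ * A = lam • 1)
    (h2 : Bmᵀ * D = Dᵀ * Bm) :
    ∃ Bb : Matrix (Fin n) (Fin n) F, Bbᵀ = Bb ∧ Bb * D = Bm := by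
  set E : Matrix (Fin n) (Fin n) F := lam⁻¹ • Aᵀ with hE
  have hED : E * D = 1 := by
    rw [hE, Matrix.smul_mul, h1, smul_smul, inv_mul_cancel₀ hlne, one_smul]
  have hDE : D * E = 1 := mul_eq_one_comm.mpr hED
  have hDtA : (lam⁻¹ • Dᵀ) * A = 1 := by
    rw [Matrix.smul_mul, h3, smul_smul, inv_mul_cancel₀ hlne, one_smul]
  have hADt : A * Dᵀ = lam • 1 := by
    have := mul_eq_one_comm.mpr hDtA
    rw [Matrix.mul_smul] at this
    calc A * Dᵀ = lam • (lam⁻¹ • (A * Dᵀ)) := by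
          rw [smul_smul, mul_inv_cancel₀ hlne, one_smul]
      _ = lam • (1 : Matrix (Fin n) (Fin n) F) := by rw [this]
  refine ⟨Bm * E, ?_, by rw [Matrix.mul_assoc, hED, Matrix.mul_one]⟩
  have key : A * Bmᵀ = lam • (Bm * E) := by
    calc A * Bmᵀ = A * Bmᵀ * (D * E) := by rw [hDE, Matrix.mul_one]
      _ = A * (Bmᵀ * D) * E := by noncomm_ring
      _ = A * (Dᵀ * Bm) * E := by rw [h2]
      _ = (A * Dᵀ) * (Bm * E) := by noncomm_ring
      _ = lam • (Bm * E) := by rw [hADt, Matrix.smul_mul, Matrix.one_mul]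
  calc (Bm * E)ᵀ = Eᵀ * Bmᵀ := by rw [Matrix.transpose_mul]
    _ = lam⁻¹ • (A * Bmᵀ) := by
        rw [hE, Matrix.transpose_smul, Matrix.transpose_transpose, Matrix.smul_mul]
    _ = lam⁻¹ • (lam • (Bm * E)) := by rw [key]
    _ = Bm * E := by rw [smul_smul, inv_mul_cancel₀ hlne, one_smul]

lemma toZMod_eq_zero_iff (x : ℤ_[p]) :
    PadicInt.toZMod x = 0 ↔ ‖(x : ℚ_[p])‖ ≤ ((p : ℝ))⁻¹ := by
  have h1 : PadicInt.toZMod x = 0 ↔ x ∈ RingHom.ker (PadicInt.toZMod (p := p)) := by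
    simp [RingHom.mem_ker]
  rw [h1, PadicInt.ker_toZMod, IsLocalRing.mem_maximalIdeal, mem_nonunits_iff,
    PadicInt.not_isUnit_iff]
  have h2 := PadicInt.norm_le_pow_iff_norm_lt_pow_add_one x (-1)
  norm_num at h2
  rw [← PadicInt.norm_def]
  exact h2.symm

lemma exists_int_B (A Bm C D : Matrix (Fin n) (Fin n) ℤ_[p]) (lam : ℤ_[p])
    (hlam : ‖lam‖ = 1) (hC : ∀ i j, PadicInt.toZMod (C i j) = 0)
    (h1 : Aᵀ * D - Cᵀ * Bm = lam • 1)
    (h3 : Bmᵀ * C - Dᵀ * A = -(lam • 1))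
    (h2 : Bmᵀ * D - Dᵀ * Bm = 0) :
    ∃ B : Matrix (Fin n) (Fin n) ℤ, Bᵀ = B ∧ (∀ i j, 0 ≤ B i j ∧ B i j < (p:ℤ)) ∧
      ∀ i j, ‖(((Bm - (B.map (fun x : ℤ => (x : ℤ_[p]))) * D) i j : ℤ_[p]) : ℚ_[p])‖
        ≤ ((p:ℝ))⁻¹ := by
  haveI : NeZero p := ⟨(Fact.out : p.Prime).ne_zero⟩
  set φ : ℤ_[p] →+* ZMod p := PadicInt.toZMod with hφ
  set Ab := φ.mapMatrix A with hAb
  set Bmb := φ.mapMatrix Bm with hBmb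
  set Db := φ.mapMatrix D with hDb
  have hCb : φ.mapMatrix C = 0 := by
    ext i j; simp [RingHom.mapMatrix_apply, Matrix.map_apply, hC i j]
  have htr : ∀ X : Matrix (Fin n) (Fin n) ℤ_[p], φ.mapMatrix (Xᵀ) = (φ.mapMatrix X)ᵀ := by
    intro X; simp [RingHom.mapMatrix_apply, Matrix.transpose_map]
  have hsm : ∀ x : ℤ_[p],
      φ.mapMatrix (x • (1 : Matrix (Fin n) (Fin n) ℤ_[p])) = φ x • 1 := by
    intro x; ext i j
    rcases eq_or_ne i j with rfl | h
    · simp [RingHom.mapMatrix_apply, Matrix.map_apply, Matrix.smul_apply, Matrix.one_apply]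
    · simp [RingHom.mapMatrix_apply, Matrix.map_apply, Matrix.smul_apply,
        Matrix.one_apply_ne h]
  have hlb : φ lam ≠ 0 := by
    have hu : IsUnit lam := PadicInt.isUnit_iff.mpr hlam
    exact (hu.map φ).ne_zero
  have H1 := congrArg φ.mapMatrix h1
  rw [map_sub, _root_.map_mul, _root_.map_mul, htr, htr, hCb, hsm] at H1
  rw [Matrix.transpose_zero, Matrix.zero_mul, sub_zero] at H1
  have H3 := congrArg φ.mapMatrix h3
  rw [map_neg, map_sub, _root_.map_mul, _root_.map_mul, htr, htr, hCb, hsm] at H3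
  rw [Matrix.mul_zero, zero_sub, neg_inj] at H3
  have H2 := congrArg φ.mapMatrix h2
  rw [map_sub, _root_.map_mul, _root_.map_mul, htr, htr, map_zero, sub_eq_zero] at H2
  obtain ⟨Bb, hBbs, hBbD⟩ := field_symm_solution hlb H1 H3 H2
  refine ⟨fun i j => ((Bb i j).val : ℤ), ?_, fun i j => ⟨Int.ofNat_nonneg _, ?_⟩, ?_⟩
  · ext i j
    show ((Bb j i).val : ℤ) = ((Bb i j).val : ℤ)
    exact_mod_cast congrArg ZMod.val (congrFun (congrFun hBbs i) j)
  · show ((Bb i j).val : ℤ) < (p : ℤ)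
    exact_mod_cast ZMod.val_lt (Bb i j)
  · have hmap : φ.mapMatrix ((Matrix.of fun i j => ((Bb i j).val : ℤ)).map
        (fun x : ℤ => (x : ℤ_[p]))) = Bb := by
      ext i j
      simp [RingHom.mapMatrix_apply, Matrix.map_apply, map_intCast, ZMod.natCast_val,
        ZMod.cast_id]
    have Hfin : φ.mapMatrix (Bm - (Matrix.of fun i j => ((Bb i j).val : ℤ)).map
        (fun x : ℤ => (x : ℤ_[p])) * D) = 0 := by
      rw [map_sub, _root_.map_mul, hmap, hBbD]
      exact sub_self _
    intro i j
    have hz : φ ((Bm - (Matrix.of fun i j => ((Bb i j).val : ℤ)).map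
        (fun x : ℤ => (x : ℤ_[p])) * D) i j) = 0 := by
      have := congrFun (congrFun (congrArg (fun X => (X : Matrix (Fin n) (Fin n) (ZMod p)))
        Hfin) i) j
      simpa [RingHom.mapMatrix_apply, Matrix.map_apply] using this
    exact (toZMod_eq_zero_iff _).mp hz

end HeckeAux3

namespace HeckeAux4

lemma card_le_pairs (n : ℕ) :
    Fintype.card {q : Fin n × Fin n // q.1 ≤ q.2} = n * (n + 1) / 2 := by
  have e : {q : Fin n × Fin n // q.1 ≤ q.2} ≃ Σ j : Fin n, Fin (j.1 + 1) :=
    { toFun := fun q => ⟨q.1.2, ⟨q.1.1.1, by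
        have := q.2
        rw [Fin.le_def] at this
        omega⟩⟩
      invFun := fun x => ⟨(⟨x.2.1, by have h1 := x.2.2; have h2 := x.1.2; omega⟩, x.1), by
        rw [Fin.le_def]
        have := x.2.2
        simp
        omega⟩
      left_inv := fun q => by
        ext <;> simp
      right_inv := fun x => by
        ext <;> simp }
  rw [Fintype.card_congr e, Fintype.card_sigma]
  simp only [Fintype.card_fin]
  rw [Fin.sum_univ_eq_sum_range (fun k => k + 1) n]
  have h1 : ∑ k ∈ Finset.range n, (k + 1) = ∑ k ∈ Finset.range (n + 1), k := by
    rw [Finset.sum_range_succ' (fun k => k) n]; simp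
  have h2 : (∑ k ∈ Finset.range (n + 1), k) * 2 = (n + 1) * n := by
    simpa using Finset.sum_range_id_mul_two (n + 1)
  have h3 : n * (n + 1) = (n + 1) * n := Nat.mul_comm _ _
  omega

lemma card_S_aux (p n : ℕ) (hp : 0 < p) :
    {B : Matrix (Fin n) (Fin n) ℤ | Bᵀ = B ∧ ∀ i j, 0 ≤ B i j ∧ B i j < (p : ℤ)}.ncard
      = p ^ (n * (n + 1) / 2) := by
  set S := {B : Matrix (Fin n) (Fin n) ℤ | Bᵀ = B ∧ ∀ i j, 0 ≤ B i j ∧ B i j < (p : ℤ)}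
    with hS
  have e : S ≃ ({q : Fin n × Fin n // q.1 ≤ q.2} → Fin p) :=
    { toFun := fun B q => ⟨(B.1 q.1.1 q.1.2).toNat, by
        have h := B.2.2 q.1.1 q.1.2
        omega⟩
      invFun := fun f => ⟨Matrix.of fun i j =>
          if h : i ≤ j then ((f ⟨(i, j), h⟩ : ℕ) : ℤ)
          else ((f ⟨(j, i), le_of_not_ge h⟩ : ℕ) : ℤ), by
        constructor
        · ext i j
          rw [Matrix.transpose_apply]
          show (if h : j ≤ i then ((f ⟨(j, i), h⟩ : ℕ) : ℤ)
              else ((f ⟨(i, j), le_of_not_ge h⟩ : ℕ) : ℤ))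
            = (if h : i ≤ j then ((f ⟨(i, j), h⟩ : ℕ) : ℤ)
              else ((f ⟨(j, i), le_of_not_ge h⟩ : ℕ) : ℤ))
          rcases le_or_gt i j with h | h
          · rcases le_or_gt j i with h' | h'
            · have : i = j := le_antisymm h h'
              subst this; simp
            · rw [dif_neg (not_le_of_gt h'), dif_pos h]
          · rw [dif_pos h.le, dif_neg (not_le_of_gt h)]
        · intro i j
          show 0 ≤ (if h : i ≤ j then ((f ⟨(i, j), h⟩ : ℕ) : ℤ)
              else ((f ⟨(j, i), le_of_not_ge h⟩ : ℕ) : ℤ))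
            ∧ (if h : i ≤ j then ((f ⟨(i, j), h⟩ : ℕ) : ℤ)
              else ((f ⟨(j, i), le_of_not_ge h⟩ : ℕ) : ℤ)) < (p : ℤ)
          constructor
          · split <;> positivity
          · split <;> exact_mod_cast Fin.is_lt _⟩
      left_inv := fun B => by
        apply Subtype.ext
        ext i j
        show (if h : i ≤ j then ((B.1 i j).toNat : ℤ) else ((B.1 j i).toNat : ℤ)) = B.1 i j
        have hsym : B.1 j i = B.1 i j := (congrFun (congrFun B.2.1 j) i).symm
        rcases le_or_gt i j with h | h
        · rw [dif_pos h, Int.toNat_of_nonneg (B.2.2 i j).1]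
        · rw [dif_neg (not_le_of_gt h), hsym, Int.toNat_of_nonneg (B.2.2 i j).1]
      right_inv := fun f => by
        funext q
        apply Fin.ext
        show (if h : q.1.1 ≤ q.1.2 then ((f ⟨(q.1.1, q.1.2), h⟩ : ℕ) : ℤ)
            else ((f ⟨(q.1.2, q.1.1), le_of_not_ge h⟩ : ℕ) : ℤ)).toNat = (f q : ℕ)
        rw [dif_pos q.2]
        simp }
  rw [← Nat.card_coe_set_eq, Nat.card_congr e, Nat.card_eq_fintype_card,
    Fintype.card_fun, Fintype.card_fin, card_le_pairs]

end HeckeAux4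
namespace HeckeAux5
open HeckeAux HeckeAux2
variable {p : ℕ} [Fact p.Prime] {n : ℕ}


noncomputable def Bq (p : ℕ) [Fact p.Prime] {n : ℕ} (B : Matrix (Fin n) (Fin n) ℤ) :
    Matrix (Fin n) (Fin n) ℚ_[p] := B.map fun x : ℤ => (x : ℚ_[p])

noncomputable def TB (p : ℕ) [Fact p.Prime] {n : ℕ} (B : Matrix (Fin n) (Fin n) ℤ) :
    Matrix (Fin n ⊕ Fin n) (Fin n ⊕ Fin n) ℚ_[p] :=
  Matrix.fromBlocks ((p : ℚ_[p]) • 1) (Bq p B) 0 1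

noncomputable def UB (p : ℕ) [Fact p.Prime] {n : ℕ} (B : Matrix (Fin n) (Fin n) ℤ) :
    Matrix (Fin n ⊕ Fin n) (Fin n ⊕ Fin n) ℚ_[p] :=
  Matrix.fromBlocks 1 (Bq p B) 0 1

noncomputable def Mq (p n : ℕ) [Fact p.Prime] :
    Matrix (Fin n ⊕ Fin n) (Fin n ⊕ Fin n) ℚ_[p] :=
  Matrix.fromBlocks ((p : ℚ_[p]) • 1) 0 0 1

lemma Bq_transpose {B : Matrix (Fin n) (Fin n) ℤ} (hB : Bᵀ = B) :
    (Bq p B)ᵀ = Bq p B := by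
  rw [Bq, ← Matrix.transpose_map, hB]

lemma UM_eq_T (B : Matrix (Fin n) (Fin n) ℤ) : UB p B * Mq p n = TB p B := by
  rw [UB, Mq, TB, Matrix.fromBlocks_multiply]
  congr 1 <;> simp

lemma U_similitude {B : Matrix (Fin n) (Fin n) ℤ} (hB : Bᵀ = B) :
    (UB p B)ᵀ * Jmat p n * UB p B = Jmat p n := by
  rw [UB, Matrix.fromBlocks_transpose, Jmat, Matrix.fromBlocks_multiply,
    Matrix.fromBlocks_multiply]
  have h := Bq_transpose (p := p) hB
  congr 1 <;> simp [h]

lemma T_similitude {B : Matrix (Fin n) (Fin n) ℤ} (hB : Bᵀ = B) :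
    (TB p B)ᵀ * Jmat p n * TB p B = (p : ℚ_[p]) • Jmat p n := by
  rw [TB, Matrix.fromBlocks_transpose, Jmat, Matrix.fromBlocks_multiply,
    Matrix.fromBlocks_multiply, Matrix.fromBlocks_smul]
  have h := Bq_transpose (p := p) hB
  congr 1 <;> simp [h, Matrix.smul_mul, Matrix.mul_smul]

lemma M_similitude : (Mq p n)ᵀ * Jmat p n * Mq p n = (p : ℚ_[p]) • Jmat p n := by
  rw [Mq, Matrix.fromBlocks_transpose, Jmat, Matrix.fromBlocks_multiply,
    Matrix.fromBlocks_multiply, Matrix.fromBlocks_smul]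
  congr 1 <;> simp [Matrix.smul_mul, Matrix.mul_smul]

lemma Tinv_mul (B : Matrix (Fin n) (Fin n) ℤ) :
    Matrix.fromBlocks ((p : ℚ_[p])⁻¹ • 1) ((-(p : ℚ_[p])⁻¹) • Bq p B) 0 1 * TB p B = 1 := by
  have pne : (p : ℚ_[p]) ≠ 0 := Nat.cast_ne_zero.mpr (Fact.out : p.Prime).ne_zero
  rw [TB, Matrix.fromBlocks_multiply, ← Matrix.fromBlocks_one]
  simp [Matrix.smul_mul, Matrix.mul_smul, smul_smul, inv_mul_cancel₀ pne, neg_smul]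

lemma Tinv_mul' (B₁ B₂ : Matrix (Fin n) (Fin n) ℤ) :
    Matrix.fromBlocks ((p : ℚ_[p])⁻¹ • 1) ((-(p : ℚ_[p])⁻¹) • Bq p B₂) 0 1 * TB p B₁
      = Matrix.fromBlocks 1 ((p : ℚ_[p])⁻¹ • (Bq p B₁ - Bq p B₂)) 0 1 := by
  have pne : (p : ℚ_[p]) ≠ 0 := Nat.cast_ne_zero.mpr (Fact.out : p.Prime).ne_zero
  rw [TB, Matrix.fromBlocks_multiply, Matrix.fromBlocks_inj]
  refine ⟨?_, ?_, by simp, by simp⟩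
  · simp [Matrix.smul_mul, Matrix.mul_smul, smul_smul, inv_mul_cancel₀ pne]
  · rw [smul_sub, Matrix.smul_mul, Matrix.one_mul, Matrix.mul_one, neg_smul, sub_eq_add_neg]

end HeckeAux5
namespace HeckeAux6
open HeckeAux HeckeAux2 HeckeAux3 HeckeAux5

variable {p : ℕ} [Fact p.Prime] {n : ℕ}

lemma norm_sub_le {x y : ℚ_[p]} {c : ℝ} (hx : ‖x‖ ≤ c) (hy : ‖y‖ ≤ c) : ‖x - y‖ ≤ c := by
  rw [sub_eq_add_neg]
  refine le_trans (Padic.nonarchimedean x (-y)) (max_le hx ?_)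
  rwa [norm_neg]

lemma pq_ne : ((p : ℚ_[p])) ≠ 0 :=
  Nat.cast_ne_zero.mpr (Fact.out : p.Prime).ne_zero

lemma norm_p_q : ‖(p : ℚ_[p])‖ = ((p:ℝ))⁻¹ := Padic.norm_p

lemma norm_p_inv_q : ‖((p : ℚ_[p]))⁻¹‖ = (p:ℝ) := by
  rw [norm_inv, norm_p_q, inv_inv]

/-- The key inclusion: for `g ∈ K`, `g * M` lies in some coset `T B * K`. -/
lemma main_incl {g : Matrix (Fin n ⊕ Fin n) (Fin n ⊕ Fin n) ℚ_[p]} (hg : g ∈ KK p n) :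
    ∃ B : Matrix (Fin n) (Fin n) ℤ, Bᵀ = B ∧ (∀ i j, 0 ≤ B i j ∧ B i j < (p:ℤ)) ∧
      ∃ k ∈ KK p n, g * Mq p n = TB p B * k := by
  obtain ⟨hg1, ⟨lam, hlam, hgl⟩, hg2⟩ := hg
  have hlne : lam ≠ 0 := by intro h; rw [h] at hlam; simp at hlam
  -- ℚ_p blocks
  set A := g.toBlocks₁₁ with hA
  set Bm := g.toBlocks₁₂ with hBm
  set C := g.toBlocks₂₁ with hC
  set D := g.toBlocks₂₂ with hD
  have hgb : g = Matrix.fromBlocks A Bm C D := (Matrix.fromBlocks_toBlocks g).symm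
  -- block relations over ℚ_p
  have hblocks : Matrix.fromBlocks (Aᵀ * 0 + Cᵀ * (-1)) (Aᵀ * 1 + Cᵀ * 0)
      (Bmᵀ * 0 + Dᵀ * (-1)) (Bmᵀ * 1 + Dᵀ * 0) * Matrix.fromBlocks A Bm C D
      = lam • Jmat p n := by
    rw [← Matrix.fromBlocks_multiply, ← Matrix.fromBlocks_transpose, ← hgb]
    show gᵀ * Matrix.fromBlocks 0 1 (-1) 0 * g = _
    exact hgl
  rw [Matrix.fromBlocks_multiply, Jmat, Matrix.fromBlocks_smul] at hblocks
  have e12 : (Aᵀ * 0 + Cᵀ * (-1)) * Bm + (Aᵀ * 1 + Cᵀ * 0) * D = lam • 1 := by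
    have := congrArg Matrix.toBlocks₁₂ hblocks
    simpa [Matrix.toBlocks_fromBlocks₁₂] using this
  have e21 : (Bmᵀ * 0 + Dᵀ * (-1)) * A + (Bmᵀ * 1 + Dᵀ * 0) * C = lam • (-1) := by
    have := congrArg Matrix.toBlocks₂₁ hblocks
    simpa [Matrix.toBlocks_fromBlocks₂₁] using this
  have e22 : (Bmᵀ * 0 + Dᵀ * (-1)) * Bm + (Bmᵀ * 1 + Dᵀ * 0) * D = 0 := by
    have := congrArg Matrix.toBlocks₂₂ hblocks
    simpa [Matrix.toBlocks_fromBlocks₂₂] using this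
  have q1 : Aᵀ * D - Cᵀ * Bm = lam • 1 := by
    rw [← e12]; noncomm_ring
  have q3 : Bmᵀ * C - Dᵀ * A = -(lam • 1) := by
    rw [show -(lam • (1 : Matrix (Fin n) (Fin n) ℚ_[p])) = lam • -1 from by rw [smul_neg],
      ← e21]
    noncomm_ring
  have q2 : Bmᵀ * D - Dᵀ * Bm = 0 := by
    rw [← e22]; noncomm_ring
  -- ℤ_p blocks
  set ZA : Matrix (Fin n) (Fin n) ℤ_[p] :=
    Matrix.of fun i j => (⟨A i j, hg1 _ _⟩ : ℤ_[p]) with hZA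
  set ZB : Matrix (Fin n) (Fin n) ℤ_[p] :=
    Matrix.of fun i j => (⟨Bm i j, hg1 _ _⟩ : ℤ_[p]) with hZB
  set ZC : Matrix (Fin n) (Fin n) ℤ_[p] :=
    Matrix.of fun i j => (⟨C i j, hg1 _ _⟩ : ℤ_[p]) with hZC
  set ZD : Matrix (Fin n) (Fin n) ℤ_[p] :=
    Matrix.of fun i j => (⟨D i j, hg1 _ _⟩ : ℤ_[p]) with hZD
  set lamZ : ℤ_[p] := ⟨lam, hlam.le⟩ with hlamZ
  set ι : ℤ_[p] →+* ℚ_[p] := PadicInt.Coe.ringHom with hι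
  have hinj : Function.Injective
      (fun X : Matrix (Fin n) (Fin n) ℤ_[p] => X.map ι) :=
    Matrix.map_injective Subtype.coe_injective
  have hmA : ZA.map ι = A := by ext i j; rfl
  have hmB : ZB.map ι = Bm := by ext i j; rfl
  have hmC : ZC.map ι = C := by ext i j; rfl
  have hmD : ZD.map ι = D := by ext i j; rfl
  have htr : ∀ X : Matrix (Fin n) (Fin n) ℤ_[p], (Xᵀ).map ι = (X.map ι)ᵀ := fun X =>
    Matrix.transpose_map
  have hsm1 : (lamZ • (1 : Matrix (Fin n) (Fin n) ℤ_[p])).map ι = lam • 1 := by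
    ext i j
    rcases eq_or_ne i j with rfl | h
    · simp only [Matrix.map_apply, Matrix.smul_apply, Matrix.one_apply_eq, smul_eq_mul,
        mul_one]
      rfl
    · simp [Matrix.map_apply, Matrix.smul_apply, Matrix.one_apply_ne h]
  have z1 : ZAᵀ * ZD - ZCᵀ * ZB = lamZ • 1 := by
    apply hinj
    show (ZAᵀ * ZD - ZCᵀ * ZB).map ι = (lamZ • (1 : Matrix (Fin n) (Fin n) ℤ_[p])).map ι
    rw [Matrix.map_sub _ (fun a b => by simp), hsm1]
    rw [Matrix.map_mul, Matrix.map_mul, htr, htr, hmA, hmB, hmC, hmD]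
    exact q1
  have z3 : ZBᵀ * ZC - ZDᵀ * ZA = -(lamZ • 1) := by
    apply hinj
    show (ZBᵀ * ZC - ZDᵀ * ZA).map ι
      = (-(lamZ • (1 : Matrix (Fin n) (Fin n) ℤ_[p]))).map ι
    rw [Matrix.map_sub _ (fun a b => by simp)]
    rw [Matrix.map_mul, Matrix.map_mul, htr, htr, hmA, hmB, hmC, hmD]
    rw [show (-(lamZ • (1 : Matrix (Fin n) (Fin n) ℤ_[p]))).map ι
      = -((lamZ • (1 : Matrix (Fin n) (Fin n) ℤ_[p])).map ι) from by ext i j; simp, hsm1]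
    exact q3
  have z2 : ZBᵀ * ZD - ZDᵀ * ZB = 0 := by
    apply hinj
    show (ZBᵀ * ZD - ZDᵀ * ZB).map ι = (0 : Matrix (Fin n) (Fin n) ℤ_[p]).map ι
    rw [Matrix.map_sub _ (fun a b => by simp)]
    rw [Matrix.map_mul, Matrix.map_mul, htr, htr, hmB, hmD]
    rw [show (0 : Matrix (Fin n) (Fin n) ℤ_[p]).map ι = 0 from by ext i j; simp]
    exact q2
  have hlamZn : ‖lamZ‖ = 1 := by rw [PadicInt.norm_def]; exact hlam
  have hCZ : ∀ i j, PadicInt.toZMod (ZC i j) = 0 := by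
    intro i j
    rw [toZMod_eq_zero_iff]
    exact hg2 i j
  obtain ⟨B, hBs, hBb, hBkey⟩ := exists_int_B ZA ZB ZC ZD lamZ hlamZn hCZ z1 z3 z2
  refine ⟨B, hBs, hBb, ?_⟩
  -- transfer key bound to ℚ_p
  have hZmap : (B.map (fun x : ℤ => (x : ℤ_[p]))).map ι = Bq p B := by
    ext i j
    simp [Matrix.map_apply, Bq, hι]
  have hkey : ∀ i j, ‖(Bm - Bq p B * D) i j‖ ≤ ((p:ℝ))⁻¹ := by
    intro i j
    have h0 : ((ZB - (B.map (fun x : ℤ => (x : ℤ_[p]))) * ZD).map ι) i j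
        = (Bm - Bq p B * D) i j := by
      rw [Matrix.map_sub _ (fun a b => by simp), Matrix.map_mul, hZmap, hmB, hmD]
    rw [← h0]
    exact hBkey i j
  -- construct k'
  set k' : Matrix (Fin n ⊕ Fin n) (Fin n ⊕ Fin n) ℚ_[p] :=
    Matrix.fromBlocks (A - Bq p B * C) (((p : ℚ_[p]))⁻¹ • (Bm - Bq p B * D))
      ((p : ℚ_[p]) • C) D with hk'
  have hTk : TB p B * k' = g * Mq p n := by
    rw [hk', TB, Mq, Matrix.fromBlocks_multiply]
    conv_rhs => rw [hgb]
    rw [Matrix.fromBlocks_multiply]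
    rw [Matrix.fromBlocks_inj]
    refine ⟨?_, ?_, by simp, by simp⟩
    · rw [Matrix.smul_mul, Matrix.one_mul, Matrix.mul_smul, smul_sub, sub_add_cancel,
        Matrix.mul_smul, Matrix.mul_one, Matrix.mul_zero, add_zero]
    · rw [Matrix.smul_mul, Matrix.one_mul, smul_smul, mul_inv_cancel₀ pq_ne, one_smul,
        sub_add_cancel, Matrix.mul_zero, zero_add, Matrix.mul_one]
  -- k' entry bounds
  have hBqb : ∀ i j, ‖Bq p B i j‖ ≤ 1 := by
    intro i j
    exact Padic.norm_int_le_one _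
  have hprod : ∀ i j, ‖(Bq p B * C) i j‖ ≤ 1 := by
    intro i j
    refine mul_entry_le _ _ _ _ zero_le_one fun k => ?_
    calc ‖Bq p B i k‖ * ‖C k j‖ ≤ 1 * 1 :=
          mul_le_mul (hBqb i k) (hg1 _ _) (norm_nonneg _) zero_le_one
      _ = 1 := by ring
  have hk'1 : ∀ a b, ‖k' a b‖ ≤ 1 := by
    intro a b
    rcases a with i | i <;> rcases b with j | j
    · show ‖(A - Bq p B * C) i j‖ ≤ 1
      rw [Matrix.sub_apply]
      exact norm_sub_le (hg1 _ _) (hprod i j)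
    · show ‖(((p : ℚ_[p]))⁻¹ • (Bm - Bq p B * D)) i j‖ ≤ 1
      rw [Matrix.smul_apply, smul_eq_mul, norm_mul, norm_p_inv_q]
      calc (p:ℝ) * ‖(Bm - Bq p B * D) i j‖ ≤ (p:ℝ) * ((p:ℝ))⁻¹ :=
            mul_le_mul_of_nonneg_left (hkey i j) (by positivity)
        _ = 1 := mul_inv_cancel₀ (by exact_mod_cast (Fact.out : p.Prime).ne_zero)
    · show ‖((p : ℚ_[p]) • C) i j‖ ≤ 1
      rw [Matrix.smul_apply, smul_eq_mul, norm_mul, norm_p_q]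
      calc ((p:ℝ))⁻¹ * ‖C i j‖ ≤ ((p:ℝ))⁻¹ * 1 :=
            mul_le_mul_of_nonneg_left (hg1 _ _) pinv_nonneg
        _ ≤ 1 := by rw [mul_one]; exact pinv_le_one
    · show ‖D i j‖ ≤ 1
      exact hg1 _ _
  have hk'3 : ∀ i j : Fin n, ‖k' (Sum.inr i) (Sum.inl j)‖ ≤ ((p:ℝ))⁻¹ := by
    intro i j
    show ‖((p : ℚ_[p]) • C) i j‖ ≤ ((p:ℝ))⁻¹
    rw [Matrix.smul_apply, smul_eq_mul, norm_mul, norm_p_q]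
    calc ((p:ℝ))⁻¹ * ‖C i j‖ ≤ ((p:ℝ))⁻¹ * 1 :=
          mul_le_mul_of_nonneg_left (hg1 _ _) pinv_nonneg
      _ = ((p:ℝ))⁻¹ := mul_one _
  -- similitude of k'
  have hsim : k'ᵀ * Jmat p n * k' = lam • Jmat p n := by
    have hL : (TB p B * k')ᵀ * Jmat p n * (TB p B * k')
        = (p : ℚ_[p]) • (k'ᵀ * Jmat p n * k') := by
      rw [Matrix.transpose_mul]
      calc k'ᵀ * (TB p B)ᵀ * Jmat p n * (TB p B * k')
          = k'ᵀ * ((TB p B)ᵀ * Jmat p n * TB p B) * k' := by noncomm_ring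
        _ = k'ᵀ * ((p : ℚ_[p]) • Jmat p n) * k' := by rw [T_similitude hBs]
        _ = (p : ℚ_[p]) • (k'ᵀ * Jmat p n * k') := by
            rw [Matrix.mul_smul, Matrix.smul_mul]
    have hR : (g * Mq p n)ᵀ * Jmat p n * (g * Mq p n)
        = (p : ℚ_[p]) • (lam • Jmat p n) := by
      rw [Matrix.transpose_mul]
      calc (Mq p n)ᵀ * gᵀ * Jmat p n * (g * Mq p n)
          = (Mq p n)ᵀ * (gᵀ * Jmat p n * g) * Mq p n := by noncomm_ring
        _ = (Mq p n)ᵀ * (lam • Jmat p n) * Mq p n := by rw [hgl]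
        _ = lam • ((Mq p n)ᵀ * Jmat p n * Mq p n) := by
            rw [Matrix.mul_smul, Matrix.smul_mul]
        _ = lam • ((p : ℚ_[p]) • Jmat p n) := by rw [M_similitude]
        _ = (p : ℚ_[p]) • (lam • Jmat p n) := smul_comm _ _ _
    have heq : (p : ℚ_[p]) • (k'ᵀ * Jmat p n * k')
        = (p : ℚ_[p]) • (lam • Jmat p n) := by
      rw [← hL, ← hR, hTk]
    ext a b
    have h := congrFun (congrFun heq a) b
    simp only [Matrix.smul_apply, smul_eq_mul] at h
    exact mul_left_cancel₀ pq_ne h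
  exact ⟨k', ⟨hk'1, ⟨lam, hlam, hsim⟩, hk'3⟩, hTk.symm⟩

end HeckeAux6
namespace HeckeAux6
open HeckeAux HeckeAux2 HeckeAux3 HeckeAux5
variable {p : ℕ} [Fact p.Prime] {n : ℕ}

lemma U_mem {B : Matrix (Fin n) (Fin n) ℤ} (hB : Bᵀ = B) : UB p B ∈ KK p n := by
  refine ⟨fun a b => ?_, ⟨1, by simp, by simpa using U_similitude hB⟩, fun i j => ?_⟩
  · rcases a with i | i <;> rcases b with j | j
    · show ‖(1 : Matrix (Fin n) (Fin n) ℚ_[p]) i j‖ ≤ 1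
      rcases eq_or_ne i j with rfl | h
      · simp [Matrix.one_apply_eq]
      · simp [Matrix.one_apply_ne h]
    · show ‖Bq p B i j‖ ≤ 1
      exact Padic.norm_int_le_one _
    · show ‖(0 : Matrix (Fin n) (Fin n) ℚ_[p]) i j‖ ≤ 1
      simp
    · show ‖(1 : Matrix (Fin n) (Fin n) ℚ_[p]) i j‖ ≤ 1
      rcases eq_or_ne i j with rfl | h
      · simp [Matrix.one_apply_eq]
      · simp [Matrix.one_apply_ne h]
  · show ‖(0 : Matrix (Fin n) (Fin n) ℚ_[p]) i j‖ ≤ ((p:ℝ))⁻¹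
    simpa using pinv_nonneg

end HeckeAux6

open HeckeAux HeckeAux2 HeckeAux3 HeckeAux5 HeckeAux6

/-- Left coset decomposition of the Hecke double coset `K·M·K` at `p`,
where `K` is the local Levi/congruence subgroup of `GSp_n(ℚ_p)` (integral entries,
unit similitude multiplier, lower-left block divisible by `p`) and
`M = diag(p,…,p,1,…,1)`: it is the disjoint union over symmetric integer matrices `B`
with entries in `{0,…,p-1}` of the cosets `(p·1, B; 0, 1)·K`, and there are exactly
`p^(n(n+1)/2)` of them. -/
theorem heckeOperator_coset_decomposition
    (p : ℕ) [Fact p.Prime] (n : ℕ) (hn : 1 ≤ n)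
    (J : Matrix (Fin n ⊕ Fin n) (Fin n ⊕ Fin n) ℚ_[p])
    (hJ : J = Matrix.fromBlocks 0 1 (-1) 0)
    (K : Set (Matrix (Fin n ⊕ Fin n) (Fin n ⊕ Fin n) ℚ_[p]))
    (hK : K = {g | (∀ i j, ‖g i j‖ ≤ 1) ∧
        (∃ lam : ℚ_[p], ‖lam‖ = 1 ∧ gᵀ * J * g = lam • J) ∧
        (∀ i j : Fin n, ‖g (Sum.inr i) (Sum.inl j)‖ ≤ ((p : ℝ))⁻¹)})
    (M : Matrix (Fin n ⊕ Fin n) (Fin n ⊕ Fin n) ℚ_[p])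
    (hM : M = Matrix.fromBlocks ((p : ℚ_[p]) • 1) 0 0 1)
    (S : Set (Matrix (Fin n) (Fin n) ℤ))
    (hS : S = {B | Bᵀ = B ∧ ∀ i j, 0 ≤ B i j ∧ B i j < (p : ℤ)})
    (T : Matrix (Fin n) (Fin n) ℤ → Matrix (Fin n ⊕ Fin n) (Fin n ⊕ Fin n) ℚ_[p])
    (hT : T = fun B => Matrix.fromBlocks ((p : ℚ_[p]) • 1)
        (B.map fun x => (x : ℚ_[p])) 0 1) :
    ({x | ∃ k₁ ∈ K, ∃ k₂ ∈ K, x = k₁ * M * k₂} = ⋃ B ∈ S, {x | ∃ k ∈ K, x = T B * k}) ∧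
    (∀ B₁ ∈ S, ∀ B₂ ∈ S, B₁ ≠ B₂ →
      Disjoint {x | ∃ k ∈ K, x = T B₁ * k} {x | ∃ k ∈ K, x = T B₂ * k}) ∧
    S.ncard = p ^ (n * (n + 1) / 2) := by
  subst hJ hK hM hS hT
  refine ⟨?_, ?_, ?_⟩
  · ext x
    simp only [Set.mem_setOf_eq, Set.mem_iUnion]
    constructor
    · rintro ⟨k₁, hk₁, k₂, hk₂, rfl⟩
      obtain ⟨B, hBs, hBb, k', hk', hEq⟩ :=
        main_incl (show k₁ ∈ KK p n from hk₁)
      have hEq' : k₁ * Matrix.fromBlocks ((p : ℚ_[p]) • 1) 0 0 1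
          = Matrix.fromBlocks ((p : ℚ_[p]) • 1) (B.map fun x => (x : ℚ_[p])) 0 1 * k' := hEq
      refine ⟨B, ⟨hBs, hBb⟩, k' * k₂,
        (show k' * k₂ ∈ KK p n from mul_mem_KK hk' hk₂), ?_⟩
      rw [hEq', Matrix.mul_assoc]
    · rintro ⟨B, hB, k, hk, rfl⟩
      refine ⟨UB p B, (U_mem hB.1 : _), k, hk, ?_⟩
      have h1 : UB p B * Mq p n = TB p B := UM_eq_T B
      have h2 : UB p B * Matrix.fromBlocks ((p : ℚ_[p]) • 1) 0 0 1
          = Matrix.fromBlocks ((p : ℚ_[p]) • 1) (B.map fun x => (x : ℚ_[p])) 0 1 := h1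
      rw [h2]
  · intro B₁ hB₁ B₂ hB₂ hne
    rw [Set.disjoint_left]
    rintro x ⟨k₁, hk₁, rfl⟩ ⟨k₂, hk₂, heq⟩
    obtain ⟨kinv, hkinv, hk1i, hik1⟩ := exists_inv (show k₁ ∈ KK p n from hk₁)
    have hk : k₂ * kinv ∈ KK p n := mul_mem_KK (show k₂ ∈ KK p n from hk₂) hkinv
    have heq' : TB p B₁ * k₁ = TB p B₂ * k₂ := heq
    have hT1 : TB p B₂ * (k₂ * kinv) = TB p B₁ := by
      calc TB p B₂ * (k₂ * kinv) = (TB p B₂ * k₂) * kinv := by rw [Matrix.mul_assoc]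
        _ = (TB p B₁ * k₁) * kinv := by rw [heq']
        _ = TB p B₁ * (k₁ * kinv) := by rw [Matrix.mul_assoc]
        _ = TB p B₁ := by rw [hk1i, Matrix.mul_one]
    have hkform : k₂ * kinv
        = Matrix.fromBlocks 1 (((p : ℚ_[p]))⁻¹ • (Bq p B₁ - Bq p B₂)) 0 1 := by
      calc k₂ * kinv = 1 * (k₂ * kinv) := (Matrix.one_mul _).symm
        _ = (Matrix.fromBlocks (((p : ℚ_[p]))⁻¹ • 1) ((-(p : ℚ_[p])⁻¹) • Bq p B₂) 0 1
              * TB p B₂) * (k₂ * kinv) := by rw [Tinv_mul]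
        _ = Matrix.fromBlocks (((p : ℚ_[p]))⁻¹ • 1) ((-(p : ℚ_[p])⁻¹) • Bq p B₂) 0 1
              * (TB p B₂ * (k₂ * kinv)) := by rw [Matrix.mul_assoc]
        _ = Matrix.fromBlocks (((p : ℚ_[p]))⁻¹ • 1) ((-(p : ℚ_[p])⁻¹) • Bq p B₂) 0 1
              * TB p B₁ := by rw [hT1]
        _ = Matrix.fromBlocks 1 (((p : ℚ_[p]))⁻¹ • (Bq p B₁ - Bq p B₂)) 0 1 :=
            Tinv_mul' B₁ B₂
    obtain ⟨hk1', _, _⟩ := hk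
    have hp1 : (0:ℝ) < (p:ℝ) := by
      exact_mod_cast (Fact.out : p.Prime).pos
    have key : B₁ = B₂ := by
      ext i j
      have h := hk1' (Sum.inl i) (Sum.inr j)
      rw [hkform] at h
      rw [show (Matrix.fromBlocks 1 (((p : ℚ_[p]))⁻¹ • (Bq p B₁ - Bq p B₂)) 0 1)
          (Sum.inl i) (Sum.inr j) = (((p : ℚ_[p]))⁻¹ • (Bq p B₁ - Bq p B₂)) i j from rfl]
        at h
      rw [Matrix.smul_apply, smul_eq_mul, norm_mul, norm_p_inv_q] at h
      have hd : ‖(Bq p B₁ - Bq p B₂) i j‖ ≤ ((p:ℝ))⁻¹ := by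
        rw [inv_eq_one_div, le_div_iff₀ hp1]
        linarith
      have hentry : (Bq p B₁ - Bq p B₂) i j = ((B₁ i j - B₂ i j : ℤ) : ℚ_[p]) := by
        rw [Matrix.sub_apply]
        push_cast [Bq, Matrix.map_apply]
        ring
      rw [hentry] at hd
      have hdvd : (p:ℤ) ∣ (B₁ i j - B₂ i j) := by
        rw [← Padic.norm_intCast_lt_one_iff]
        refine lt_of_le_of_lt hd ?_
        rw [inv_lt_one_iff₀]
        right
        exact_mod_cast (Fact.out : p.Prime).one_lt
      have hz := Int.eq_zero_of_abs_lt_dvd hdvd (by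
        have hb1 := hB₁.2 i j
        have hb2 := hB₂.2 i j
        rw [abs_lt]
        omega)
      omega
    exact hne key
  · exact HeckeAux4.card_S_aux p n (Fact.out : p.Prime).pos
end
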